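/- Let G be a group. Then the second derived subgroup of ν(G) satisfies ν(G)'' = [G', (G')^φ] · G'' · (G'')^φ, where G and G^φ are identified with their canonical images in ν(G), G' and G'' are the images in ν(G) of the first and second derived subgroups of G, and (G')^φ, (G'')^φ are the corresponding subgroups of the copy G^φ. -/

import Mathlib

namespace TensorNu

universe u

/-- The commutator `[x,y] = x⁻¹y⁻¹xy`. -/
def comm {K : Type*} [Group K] (x y : K) : K := x⁻¹ * y⁻¹ * x * y

/-- Conjugation `x^y = y⁻¹xy`. -/
def conj {K : Type*} [Group K] (x y : K) : K := y⁻¹ * x * y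

variable (G : Type u) [Group G]

/-- The defining relators of `ν(G)`, as elements of the free group on `G ⊕ G`,
where `Sum.inl` corresponds to the canonical copy of `G` and `Sum.inr` to the
isomorphic copy `G^φ` (`g ↦ g^φ`).  They comprise the multiplication tables of
`G` and of `G^φ`, together with the relations
`[g₁,g₂^φ]^{g₃} = [g₁^{g₃},(g₂^{g₃})^φ]` and `[g₁,g₂^φ]^{g₃} = [g₁,g₂^φ]^{g₃^φ}`. -/
def nuRels : Set (FreeGroup (G ⊕ G)) :=
  {r | (∃ g h : G, r = FreeGroup.of (Sum.inl g) * FreeGroup.of (Sum.inl h) *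
          (FreeGroup.of (Sum.inl (g * h)))⁻¹)
     ∨ (∃ g h : G, r = FreeGroup.of (Sum.inr g) * FreeGroup.of (Sum.inr h) *
          (FreeGroup.of (Sum.inr (g * h)))⁻¹)
     ∨ (∃ g₁ g₂ g₃ : G, r =
          conj (comm (FreeGroup.of (Sum.inl g₁)) (FreeGroup.of (Sum.inr g₂)))
              (FreeGroup.of (Sum.inl g₃)) *
            (comm (FreeGroup.of (Sum.inl (conj g₁ g₃)))
              (FreeGroup.of (Sum.inr (conj g₂ g₃))))⁻¹)
     ∨ (∃ g₁ g₂ g₃ : G, r =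
          conj (comm (FreeGroup.of (Sum.inl g₁)) (FreeGroup.of (Sum.inr g₂)))
              (FreeGroup.of (Sum.inl g₃)) *
            (conj (comm (FreeGroup.of (Sum.inl g₁)) (FreeGroup.of (Sum.inr g₂)))
              (FreeGroup.of (Sum.inr g₃)))⁻¹)}

/-- The group `ν(G)`. -/
abbrev Nu := PresentedGroup (nuRels G)

/-- The canonical image of `g ∈ G` in `ν(G)`. -/
def ι (g : G) : Nu G := PresentedGroup.of (Sum.inl g)

/-- The canonical image `g^φ` of `g ∈ G` (via the copy `G^φ`) in `ν(G)`. -/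
def ιφ (g : G) : Nu G := PresentedGroup.of (Sum.inr g)

/-- The set `T⊗(G)` of tensors `[a, b^φ]`, `a, b ∈ G`. -/
def tensorSet : Set (Nu G) := {x | ∃ a b : G, x = comm (ι G a) (ιφ G b)}

/-- The image of `G` in `ν(G)` as a subgroup. -/
def GSub : Subgroup (Nu G) := Subgroup.closure (Set.range (ι G))

/-- The image of `G^φ` in `ν(G)` as a subgroup. -/
def GφSub : Subgroup (Nu G) := Subgroup.closure (Set.range (ιφ G))

/-- The non-abelian tensor square `[G, G^φ] ≤ ν(G)`. -/
def tensorSquare : Subgroup (Nu G) := ⁅GSub G, GφSub G⁆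

/-- `[S, x]`: the subgroup generated by the commutators `[s, x]`, `s ∈ S`. -/
def commSub {K : Type*} [Group K] (S : Set K) (x : K) : Subgroup K :=
  Subgroup.closure {c | ∃ s ∈ S, c = comm s x}

end TensorNu

open scoped commutatorElement

namespace TensorNu

open Subgroup

section CC
variable {K : Type*} [Group K]

lemma comm_def (x y : K) : comm x y = x⁻¹ * y⁻¹ * x * y := rfl
lemma conj_def (x y : K) : conj x y = y⁻¹ * x * y := rfl

lemma comm_inv (x y : K) : (comm x y)⁻¹ = comm y x := by simp only [comm_def]; group
lemma conj_mul (x y z : K) : conj (x * y) z = conj x z * conj y z := by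
  simp only [conj_def]; group
lemma conj_inv (x y : K) : conj x⁻¹ y = (conj x y)⁻¹ := by simp only [conj_def]; group
lemma conj_conj (x y z : K) : conj (conj x y) z = conj x (y * z) := by
  simp only [conj_def]; group
lemma conj_one (x : K) : conj x 1 = x := by simp only [conj_def]; group
lemma one_conj (y : K) : conj (1 : K) y = 1 := by simp only [conj_def]; group
lemma conj_eq_mul_comm (x y : K) : conj x y = x * comm x y := by
  simp only [conj_def, comm_def]; group
lemma comm_eq_inv_mul_conj (x y : K) : comm x y = x⁻¹ * conj x y := by
  simp only [conj_def, comm_def]; group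
lemma comm_mul_right (a b c : K) : comm a (b * c) = comm a c * conj (comm a b) c := by
  simp only [conj_def, comm_def]; group
lemma comm_eq_commutator (a b : K) : comm a b = ⁅a⁻¹, b⁻¹⁆ := by
  simp only [comm_def, commutatorElement_def]; group
lemma commutator_eq_conj_comm (x y : K) : ⁅x, y⁆ = conj (comm y x)⁻¹ (y⁻¹ * x⁻¹) := by
  simp only [conj_def, comm_def, commutatorElement_def]; group
lemma mul_eq_mul_mul_comm (u v : K) : u * v = v * u * comm u v := by
  simp only [comm_def]; group

/-- `f (comm a b) = comm (f a) (f b)` for monoid homs. -/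
lemma map_comm {K' : Type*} [Group K'] (f : K →* K') (a b : K) :
    f (comm a b) = comm (f a) (f b) := by
  simp only [comm_def, map_mul, map_inv]
lemma map_conj {K' : Type*} [Group K'] (f : K →* K') (a b : K) :
    f (conj a b) = conj (f a) (f b) := by
  simp only [conj_def, map_mul, map_inv]

end CC

section Helpers
variable {N : Type*} [Group N]

/-- If the generators of `closure S` conjugate the generators of `closure T` into `closure T`
(in both directions), then every element of `closure S` conjugates `closure T` into itself. -/
lemma stab_closure {S T : Set N}
    (h : ∀ s ∈ S, (∀ t ∈ T, s * t * s⁻¹ ∈ closure T) ∧ (∀ t ∈ T, s⁻¹ * t * s ∈ closure T)) :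
    ∀ x ∈ closure S, ∀ y ∈ closure T, x * y * x⁻¹ ∈ closure T := by
  have main : ∀ x ∈ closure S,
      (∀ y ∈ closure T, x * y * x⁻¹ ∈ closure T) ∧ (∀ y ∈ closure T, x⁻¹ * y * x ∈ closure T) := by
    intro x hx
    induction hx using closure_induction with
    | mem s hs =>
      constructor
      · intro y hy
        induction hy using closure_induction with
        | mem t ht => exact (h s hs).1 t ht
        | one => simpa using one_mem _
        | mul a b _ _ iha ihb =>
          have : s * (a * b) * s⁻¹ = (s * a * s⁻¹) * (s * b * s⁻¹) := by group
          rw [this]; exact mul_mem iha ihb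
        | inv a _ iha =>
          have : s * a⁻¹ * s⁻¹ = (s * a * s⁻¹)⁻¹ := by group
          rw [this]; exact inv_mem iha
      · intro y hy
        induction hy using closure_induction with
        | mem t ht => exact (h s hs).2 t ht
        | one => simpa using one_mem _
        | mul a b _ _ iha ihb =>
          have : s⁻¹ * (a * b) * s = (s⁻¹ * a * s) * (s⁻¹ * b * s) := by group
          rw [this]; exact mul_mem iha ihb
        | inv a _ iha =>
          have : s⁻¹ * a⁻¹ * s = (s⁻¹ * a * s)⁻¹ := by group
          rw [this]; exact inv_mem iha
    | one => constructor <;> · intro y hy; simpa using hy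
    | mul a b _ _ iha ihb =>
      constructor
      · intro y hy
        have : a * b * y * (a * b)⁻¹ = a * (b * y * b⁻¹) * a⁻¹ := by group
        rw [this]; exact iha.1 _ (ihb.1 y hy)
      · intro y hy
        have : (a * b)⁻¹ * y * (a * b) = b⁻¹ * (a⁻¹ * y * a) * b := by group
        rw [this]; exact ihb.2 _ (iha.2 y hy)
    | inv a _ iha =>
      exact ⟨fun y hy => by simpa using iha.2 y hy, fun y hy => by simpa using iha.1 y hy⟩
  exact fun x hx => (main x hx).1

/-- Commutators of two closures lie in `H`, provided `H` is stable under conjugation by the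
first closure and the generator-commutators lie in `H`. -/
lemma commutator_closure_le {S : Set N} {H : Subgroup N}
    (hstab : ∀ x ∈ closure S, ∀ k ∈ H, x * k * x⁻¹ ∈ H)
    (hbase : ∀ s ∈ S, ∀ t ∈ S, ⁅s, t⁆ ∈ H) :
    ∀ x ∈ closure S, ∀ y ∈ closure S, ⁅x, y⁆ ∈ H := by
  intro x hx y hy
  induction hx, hy using closure_induction₂ with
  | mem a b ha hb => exact hbase a ha b hb
  | one_left b hb => simpa using one_mem H
  | one_right a ha => simpa using one_mem H
  | mul_left a b c ha hb hc iha ihb =>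
    have : ⁅a * b, c⁆ = a * ⁅b, c⁆ * a⁻¹ * ⁅a, c⁆ := by
      simp only [commutatorElement_def]; group
    rw [this]
    exact mul_mem (hstab a ha _ ihb) iha
  | mul_right b c a hb hc ha iha ihb =>
    have : ⁅a, b * c⁆ = ⁅a, b⁆ * (b * ⁅a, c⁆ * b⁻¹) := by
      simp only [commutatorElement_def]; group
    rw [this]
    exact mul_mem iha (hstab b hb _ ihb)
  | inv_left a b ha hb iha =>
    have : ⁅a⁻¹, b⁆ = a⁻¹ * ⁅a, b⁆⁻¹ * (a⁻¹)⁻¹ := by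
      simp only [commutatorElement_def]; group
    rw [this]
    exact hstab a⁻¹ (inv_mem ha) _ (inv_mem iha)
  | inv_right a b ha hb iha =>
    have : ⁅a, b⁻¹⁆ = b⁻¹ * ⁅a, b⁆⁻¹ * (b⁻¹)⁻¹ := by
      simp only [commutatorElement_def]; group
    rw [this]
    exact hstab b⁻¹ (inv_mem hb) _ (inv_mem iha)

end Helpers

end TensorNu
namespace TensorNu

open Subgroup

section Hom
universe u
variable {G : Type u} [Group G]

lemma rel_one {r : FreeGroup (G ⊕ G)} (h : r ∈ nuRels G) :
    PresentedGroup.mk (nuRels G) r = 1 := by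
  have : r ∈ Subgroup.normalClosure (nuRels G) := Subgroup.subset_normalClosure h
  exact (QuotientGroup.eq_one_iff r).mpr this

lemma ι_def' (g : G) : ι G g = PresentedGroup.mk (nuRels G) (FreeGroup.of (Sum.inl g)) := rfl
lemma ιφ_def' (g : G) : ιφ G g = PresentedGroup.mk (nuRels G) (FreeGroup.of (Sum.inr g)) := rfl

lemma ι_mul (g h : G) : ι G (g * h) = ι G g * ι G h := by
  have h1 := rel_one (G := G) (Or.inl ⟨g, h, rfl⟩)
  simp only [map_mul, map_inv, ← ι_def'] at h1
  rw [mul_inv_eq_one] at h1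
  exact h1.symm

lemma ιφ_mul (g h : G) : ιφ G (g * h) = ιφ G g * ιφ G h := by
  have h1 := rel_one (G := G) (Or.inr (Or.inl ⟨g, h, rfl⟩))
  simp only [map_mul, map_inv, ← ιφ_def'] at h1
  rw [mul_inv_eq_one] at h1
  exact h1.symm

/-- `ι` as a monoid hom. -/
def ihom : G →* Nu G := MonoidHom.mk' (ι G) (ι_mul)

/-- `ιφ` as a monoid hom. -/
def fhom : G →* Nu G := MonoidHom.mk' (ιφ G) (ιφ_mul)

@[simp] lemma ihom_apply (g : G) : (ihom : G →* Nu G) g = ι G g := rfl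
@[simp] lemma fhom_apply (g : G) : (fhom : G →* Nu G) g = ιφ G g := rfl

lemma ι_inv (g : G) : ι G g⁻¹ = (ι G g)⁻¹ := by
  simpa using map_inv (ihom : G →* Nu G) g
lemma ιφ_inv (g : G) : ιφ G g⁻¹ = (ιφ G g)⁻¹ := by
  simpa using map_inv (fhom : G →* Nu G) g
lemma ι_comm (g h : G) : ι G (comm g h) = comm (ι G g) (ι G h) :=
  map_comm (ihom : G →* Nu G) g h
lemma ιφ_comm (g h : G) : ιφ G (comm g h) = comm (ιφ G g) (ιφ G h) :=
  map_comm (fhom : G →* Nu G) g h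
lemma ι_conjG (g h : G) : ι G (conj g h) = conj (ι G g) (ι G h) :=
  map_conj (ihom : G →* Nu G) g h
lemma ιφ_conjG (g h : G) : ιφ G (conj g h) = conj (ιφ G g) (ιφ G h) :=
  map_conj (fhom : G →* Nu G) g h

/-- Relation R3: conjugation of a tensor by `ι x`. -/
lemma tconj (g h x : G) :
    conj (comm (ι G g) (ιφ G h)) (ι G x) = comm (ι G (conj g x)) (ιφ G (conj h x)) := by
  have h1 := rel_one (G := G) (Or.inr (Or.inr (Or.inl ⟨g, h, x, rfl⟩)))
  set f := PresentedGroup.mk (nuRels G)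
  have e : f (conj (comm (FreeGroup.of (Sum.inl g)) (FreeGroup.of (Sum.inr h)))
        (FreeGroup.of (Sum.inl x)) *
      (comm (FreeGroup.of (Sum.inl (conj g x))) (FreeGroup.of (Sum.inr (conj h x))))⁻¹)
      = conj (comm (ι G g) (ιφ G h)) (ι G x) *
        (comm (ι G (conj g x)) (ιφ G (conj h x)))⁻¹ := by
    simp only [map_mul, map_inv, map_comm, map_conj]; rfl
  rw [e] at h1
  rw [mul_inv_eq_one] at h1
  exact h1

/-- Relation R4: conjugation of a tensor by `ι x` equals conjugation by `ιφ x`. -/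
lemma fconj (g h x : G) :
    conj (comm (ι G g) (ιφ G h)) (ι G x) = conj (comm (ι G g) (ιφ G h)) (ιφ G x) := by
  have h1 := rel_one (G := G) (Or.inr (Or.inr (Or.inr ⟨g, h, x, rfl⟩)))
  set f := PresentedGroup.mk (nuRels G)
  have e : f (conj (comm (FreeGroup.of (Sum.inl g)) (FreeGroup.of (Sum.inr h)))
        (FreeGroup.of (Sum.inl x)) *
      (conj (comm (FreeGroup.of (Sum.inl g)) (FreeGroup.of (Sum.inr h)))
        (FreeGroup.of (Sum.inr x)))⁻¹)
      = conj (comm (ι G g) (ιφ G h)) (ι G x) *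
        (conj (comm (ι G g) (ιφ G h)) (ιφ G x))⁻¹ := by
    simp only [map_mul, map_inv, map_comm, map_conj]; rfl
  rw [e] at h1
  rw [mul_inv_eq_one] at h1
  exact h1

/-- R3 with `ιφ`-conjugator. -/
lemma tconjφ (g h x : G) :
    conj (comm (ι G g) (ιφ G h)) (ιφ G x) = comm (ι G (conj g x)) (ιφ G (conj h x)) := by
  rw [← fconj, tconj]

lemma top_gen : closure (Set.range (ι G) ∪ Set.range (ιφ G)) = (⊤ : Subgroup (Nu G)) := by
  have : Set.range (ι G) ∪ Set.range (ιφ G) =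
      Set.range (PresentedGroup.of : G ⊕ G → Nu G) := by
    ext x
    constructor
    · rintro (⟨g, rfl⟩ | ⟨g, rfl⟩)
      · exact ⟨Sum.inl g, rfl⟩
      · exact ⟨Sum.inr g, rfl⟩
    · rintro ⟨(g | g), rfl⟩
      · exact Or.inl ⟨g, rfl⟩
      · exact Or.inr ⟨g, rfl⟩
  rw [this, PresentedGroup.closure_range_of]

end Hom

end TensorNu
namespace TensorNu

open Subgroup

section Core
universe u
variable {G : Type u} [Group G]

/-- The subgroup generated by the tensors. -/
def T0 : Subgroup (Nu G) := closure (tensorSet G)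

/-- F1: for any `t` in the tensor subgroup, conjugation by `ι x` and by `ιφ x` agree. -/
lemma conj_T0 {t : Nu G} (ht : t ∈ (T0 : Subgroup (Nu G))) (x : G) :
    conj t (ι G x) = conj t (ιφ G x) := by
  induction ht using closure_induction with
  | mem s hs => obtain ⟨a, b, rfl⟩ := hs; exact fconj a b x
  | one => rw [one_conj, one_conj]
  | mul a b _ _ iha ihb => rw [conj_mul, conj_mul, iha, ihb]
  | inv a _ iha => rw [conj_inv, conj_inv, iha]

/-- F2 (Peiffer): conjugation of a basic tensor by a basic tensor equals conjugation by
`ι` of the corresponding commutator. -/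
lemma peiffer (a b x y : G) :
    conj (comm (ι G a) (ιφ G b)) (comm (ι G x) (ιφ G y)) =
      conj (comm (ι G a) (ιφ G b)) (ι G (comm x y)) := by
  have e : comm (ι G x) (ιφ G y) = (ι G x)⁻¹ * ((ιφ G y)⁻¹ * (ι G x * ιφ G y)) := by
    rw [comm_def]; group
  have L0 : conj (comm (ι G a) (ιφ G b)) (comm (ι G x) (ιφ G y)) =
      conj (conj (conj (conj (comm (ι G a) (ιφ G b)) (ι G x)⁻¹) (ιφ G y)⁻¹) (ι G x)) (ιφ G y) := by
    rw [conj_conj, conj_conj, conj_conj, e]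
  have L : conj (comm (ι G a) (ιφ G b)) (comm (ι G x) (ιφ G y)) =
      comm (ι G (conj (conj (conj (conj a x⁻¹) y⁻¹) x) y))
        (ιφ G (conj (conj (conj (conj b x⁻¹) y⁻¹) x) y)) := by
    rw [L0, ← ι_inv, ← ιφ_inv, tconj, tconjφ, tconj, tconjφ]
  have R : conj (comm (ι G a) (ιφ G b)) (ι G (comm x y)) =
      comm (ι G (conj a (comm x y))) (ιφ G (conj b (comm x y))) := tconj a b _
  rw [L, R]
  have harg : ∀ c : G, conj (conj (conj (conj c x⁻¹) y⁻¹) x) y = conj c (comm x y) := by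
    intro c
    rw [conj_conj, conj_conj, conj_conj, comm_def]
    congr 1
    group
  rw [harg a, harg b]

/-- The key mechanical identity: `[ι k, [ι g, (ι h)^φ]] = [ι k, (comm g h)^φ]`. -/
lemma mechA (g h k : G) :
    comm (ι G k) (comm (ι G g) (ιφ G h)) = comm (ι G k) (ιφ G (comm g h)) := by
  have hsplit : comm g h = conj h⁻¹ g * h := by simp only [comm_def, conj_def]
  have R : comm (ι G k) (ιφ G (comm g h)) =
      comm (ι G k) (ιφ G h) * comm (ι G (conj k h)) (ιφ G (conj (conj h⁻¹ g) h)) := by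
    rw [hsplit, ιφ_mul, comm_mul_right, tconjφ]
  have e : comm (ι G g) (ιφ G h) = (ι G g)⁻¹ * ((ιφ G h)⁻¹ * (ι G g * ιφ G h)) := by
    rw [comm_def]; group
  have L0 : conj (ι G k) (comm (ι G g) (ιφ G h)) =
      conj (conj (conj (conj (ι G k) (ι G g)⁻¹) (ιφ G h)⁻¹) (ι G g)) (ιφ G h) := by
    rw [conj_conj, conj_conj, conj_conj, e]
  have s1 : conj (ι G k) (ι G g)⁻¹ = ι G (conj k g⁻¹) := by
    rw [← ι_inv, ← ι_conjG]
  have s2 : conj (ι G (conj k g⁻¹)) (ιφ G h)⁻¹ =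
      ι G (conj k g⁻¹) * comm (ι G (conj k g⁻¹)) (ιφ G h⁻¹) := by
    rw [← ιφ_inv, conj_eq_mul_comm]
  have hk : conj (conj k g⁻¹) g = k := by rw [conj_conj, inv_mul_cancel, conj_one]
  have s3 : conj (ι G (conj k g⁻¹) * comm (ι G (conj k g⁻¹)) (ιφ G h⁻¹)) (ι G g) =
      ι G k * comm (ι G k) (ιφ G (conj h⁻¹ g)) := by
    rw [conj_mul, ← ι_conjG, tconj, hk]
  have s4 : conj (ι G k * comm (ι G k) (ιφ G (conj h⁻¹ g))) (ιφ G h) =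
      ι G k * comm (ι G k) (ιφ G h) *
        comm (ι G (conj k h)) (ιφ G (conj (conj h⁻¹ g) h)) := by
    rw [conj_mul, conj_eq_mul_comm (ι G k) (ιφ G h), tconjφ, mul_assoc]
  calc comm (ι G k) (comm (ι G g) (ιφ G h))
      = (ι G k)⁻¹ * conj (ι G k) (comm (ι G g) (ιφ G h)) := comm_eq_inv_mul_conj _ _
    _ = (ι G k)⁻¹ * (ι G k * comm (ι G k) (ιφ G h) *
          comm (ι G (conj k h)) (ιφ G (conj (conj h⁻¹ g) h))) := by
        rw [L0, s1, s2, s3, s4, mul_assoc]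
    _ = comm (ι G k) (ιφ G h) * comm (ι G (conj k h)) (ιφ G (conj (conj h⁻¹ g) h)) := by
        group
    _ = comm (ι G k) (ιφ G (comm g h)) := R.symm

/-- Mech∘ : `[t_{g,h}, ι k] = [ι k, (comm g h)^φ]⁻¹`. -/
lemma mech0 (g h k : G) :
    comm (comm (ι G g) (ιφ G h)) (ι G k) = (comm (ι G k) (ιφ G (comm g h)))⁻¹ := by
  rw [← mechA g h k, comm_inv]

end Core

end TensorNu
namespace TensorNu

open Subgroup

section Sub
universe u
variable {G : Type u} [Group G]

lemma ι_one : ι G (1 : G) = 1 := map_one (ihom : G →* Nu G)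

lemma commutator_eq_comm_inv {K : Type*} [Group K] (a b : K) : ⁅a, b⁆ = comm a⁻¹ b⁻¹ := by
  rw [comm_eq_commutator, inv_inv, inv_inv]

lemma comm_mem_DS1 (g h : G) : comm g h ∈ derivedSeries G 1 := by
  rw [comm_eq_commutator]
  have e : derivedSeries G 1 = ⁅(⊤ : Subgroup G), ⊤⁆ := by
    rw [show (1 : ℕ) = 0 + 1 from rfl, derivedSeries_succ, derivedSeries_zero]
  rw [e]
  exact commutator_mem_commutator (mem_top _) (mem_top _)

lemma comm_mem_DS2 {u v : G} (hu : u ∈ derivedSeries G 1) (hv : v ∈ derivedSeries G 1) :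
    comm u v ∈ derivedSeries G 2 := by
  rw [comm_eq_commutator]
  rw [show (2 : ℕ) = 1 + 1 from rfl, derivedSeries_succ]
  exact commutator_mem_commutator (inv_mem hu) (inv_mem hv)

lemma conj_mem_DS {n : ℕ} {u : G} (hu : u ∈ derivedSeries G n) (x : G) :
    conj u x ∈ derivedSeries G n := by
  have := (derivedSeries_normal G n).conj_mem u hu x⁻¹
  simpa [conj_def] using this

lemma ds2_le_ds1 : derivedSeries G 2 ≤ derivedSeries G 1 := by
  rw [show (2 : ℕ) = 1 + 1 from rfl, derivedSeries_succ]
  refine commutator_le.mpr fun a ha b hb => ?_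
  rw [commutatorElement_def]
  exact mul_mem (mul_mem (mul_mem ha hb) (inv_mem ha)) (inv_mem hb)

/-- Generators of `[G', (G')^φ]`. -/
def TLset (G : Type u) [Group G] : Set (Nu G) :=
  {x | ∃ u ∈ derivedSeries G 1, ∃ v ∈ derivedSeries G 1, x = comm (ι G u) (ιφ G v)}

def SEset (G : Type u) [Group G] : Set (Nu G) :=
  tensorSet G ∪ ι G '' (derivedSeries G 1 : Set G) ∪ ιφ G '' (derivedSeries G 1 : Set G)

def SKset (G : Type u) [Group G] : Set (Nu G) :=
  TLset G ∪ ι G '' (derivedSeries G 2 : Set G) ∪ ιφ G '' (derivedSeries G 2 : Set G)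

/-- `closure (TLset G)` is stable under all conjugations. -/
lemma L_stab : ∀ x : Nu G, ∀ l ∈ closure (TLset G), x * l * x⁻¹ ∈ closure (TLset G) := by
  have aux : ∀ g : G, ∀ t ∈ TLset G,
      conj t (ι G g) ∈ TLset G ∧ conj t (ιφ G g) ∈ TLset G := by
    rintro g t ⟨u, hu, v, hv, rfl⟩
    constructor
    · rw [tconj]
      exact ⟨_, conj_mem_DS hu g, _, conj_mem_DS hv g, rfl⟩
    · rw [tconjφ]
      exact ⟨_, conj_mem_DS hu g, _, conj_mem_DS hv g, rfl⟩
  have h := stab_closure (S := Set.range (ι G) ∪ Set.range (ιφ G)) (T := TLset G) ?_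
  · intro x l hl
    apply h x ?_ l hl
    rw [top_gen]; exact mem_top x
  · rintro s (⟨g, rfl⟩ | ⟨g, rfl⟩)
    · constructor
      · intro t ht
        have : ι G g * t * (ι G g)⁻¹ = conj t (ι G g⁻¹) := by rw [conj_def, ι_inv]; group
        rw [this]; exact subset_closure (aux g⁻¹ t ht).1
      · intro t ht
        have : (ι G g)⁻¹ * t * ι G g = conj t (ι G g) := by rw [conj_def]
        rw [this]; exact subset_closure (aux g t ht).1
    · constructor
      · intro t ht
        have : ιφ G g * t * (ιφ G g)⁻¹ = conj t (ιφ G g⁻¹) := by rw [conj_def, ιφ_inv]; group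
        rw [this]; exact subset_closure (aux g⁻¹ t ht).2
      · intro t ht
        have : (ιφ G g)⁻¹ * t * ιφ G g = conj t (ιφ G g) := by rw [conj_def]
        rw [this]; exact subset_closure (aux g t ht).2

/-- `closure (SEset G)` is normal. -/
lemma E_stab : ∀ x : Nu G, ∀ e ∈ closure (SEset G), x * e * x⁻¹ ∈ closure (SEset G) := by
  have mem_tensor : ∀ a b : G, comm (ι G a) (ιφ G b) ∈ closure (SEset G) := fun a b =>
    subset_closure (Or.inl (Or.inl ⟨a, b, rfl⟩))
  have mem_ι : ∀ {u : G}, u ∈ derivedSeries G 1 → ι G u ∈ closure (SEset G) := fun hu =>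
    subset_closure (Or.inl (Or.inr ⟨_, hu, rfl⟩))
  have mem_ιφ : ∀ {u : G}, u ∈ derivedSeries G 1 → ιφ G u ∈ closure (SEset G) := fun hu =>
    subset_closure (Or.inr ⟨_, hu, rfl⟩)
  have aux : ∀ g : G, ∀ t ∈ SEset G,
      conj t (ι G g) ∈ closure (SEset G) ∧ conj t (ιφ G g) ∈ closure (SEset G) := by
    rintro g t ((⟨a, b, rfl⟩ | ⟨u, hu, rfl⟩) | ⟨u, hu, rfl⟩)
    · rw [tconj, tconjφ]
      exact ⟨mem_tensor _ _, mem_tensor _ _⟩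
    · constructor
      · rw [← ι_conjG]; exact mem_ι (conj_mem_DS hu g)
      · rw [conj_eq_mul_comm]
        exact mul_mem (mem_ι hu) (mem_tensor _ _)
    · constructor
      · rw [conj_eq_mul_comm, ← comm_inv]
        exact mul_mem (mem_ιφ hu) (inv_mem (mem_tensor _ _))
      · rw [← ιφ_conjG]; exact mem_ιφ (conj_mem_DS hu g)
  have h := stab_closure (S := Set.range (ι G) ∪ Set.range (ιφ G)) (T := SEset G) ?_
  · intro x l hl
    apply h x ?_ l hl
    rw [top_gen]; exact mem_top x
  · rintro s (⟨g, rfl⟩ | ⟨g, rfl⟩)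
    · constructor
      · intro t ht
        have : ι G g * t * (ι G g)⁻¹ = conj t (ι G g⁻¹) := by rw [conj_def, ι_inv]; group
        rw [this]; exact (aux g⁻¹ t ht).1
      · intro t ht
        have : (ι G g)⁻¹ * t * ι G g = conj t (ι G g) := by rw [conj_def]
        rw [this]; exact (aux g t ht).1
    · constructor
      · intro t ht
        have : ιφ G g * t * (ιφ G g)⁻¹ = conj t (ιφ G g⁻¹) := by rw [conj_def, ιφ_inv]; group
        rw [this]; exact (aux g⁻¹ t ht).2
      · intro t ht
        have : (ιφ G g)⁻¹ * t * ιφ G g = conj t (ιφ G g) := by rw [conj_def]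
        rw [this]; exact (aux g t ht).2

end Sub

end TensorNu
namespace TensorNu

open Subgroup

section Sub2
universe u
variable {G : Type u} [Group G]

/-- Conjugating a basic tensor by the inverse of a basic tensor. -/
lemma comm_inv_right' {K' : Type*} [Group K'] (a b : K') :
    comm a b⁻¹ = conj (comm a b)⁻¹ b⁻¹ := by
  simp only [comm_def, conj_def]; group

lemma peiffer' (a b x y : G) :
    conj (comm (ι G a) (ιφ G b)) (comm (ι G x) (ιφ G y))⁻¹ =
      conj (comm (ι G a) (ιφ G b)) (ι G (comm x y)⁻¹) := by
  have h1 : conj (conj (comm (ι G a) (ιφ G b)) (ι G (comm x y)⁻¹)) (comm (ι G x) (ιφ G y)) =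
      comm (ι G a) (ιφ G b) := by
    calc conj (conj (comm (ι G a) (ιφ G b)) (ι G (comm x y)⁻¹)) (comm (ι G x) (ιφ G y))
        = conj (comm (ι G (conj a (comm x y)⁻¹)) (ιφ G (conj b (comm x y)⁻¹)))
            (comm (ι G x) (ιφ G y)) := by rw [tconj]
      _ = conj (comm (ι G (conj a (comm x y)⁻¹)) (ιφ G (conj b (comm x y)⁻¹)))
            (ι G (comm x y)) := peiffer _ _ _ _
      _ = conj (conj (comm (ι G a) (ιφ G b)) (ι G (comm x y)⁻¹)) (ι G (comm x y)) := by
            rw [tconj a b ((comm x y)⁻¹)]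
      _ = comm (ι G a) (ιφ G b) := by
            rw [conj_conj, ← ι_mul, inv_mul_cancel, ι_one, conj_one]
  calc conj (comm (ι G a) (ιφ G b)) (comm (ι G x) (ιφ G y))⁻¹
      = conj (conj (conj (comm (ι G a) (ιφ G b)) (ι G (comm x y)⁻¹)) (comm (ι G x) (ιφ G y)))
          (comm (ι G x) (ιφ G y))⁻¹ := by rw [h1]
    _ = conj (conj (comm (ι G a) (ιφ G b)) (ι G (comm x y)⁻¹))
          (comm (ι G x) (ιφ G y) * (comm (ι G x) (ιφ G y))⁻¹) := by rw [conj_conj]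
    _ = conj (comm (ι G a) (ιφ G b)) (ι G (comm x y)⁻¹) := by rw [mul_inv_cancel, conj_one]

lemma comm_tensor_φ (x y w : G) :
    comm (comm (ι G x) (ιφ G y)) (ιφ G w) = comm (comm (ι G x) (ιφ G y)) (ι G w) := by
  rw [comm_eq_inv_mul_conj (comm (ι G x) (ιφ G y)) (ιφ G w),
    comm_eq_inv_mul_conj (comm (ι G x) (ιφ G y)) (ι G w), fconj]

lemma comm_tensor_tensor (a b x y : G) :
    comm (comm (ι G a) (ιφ G b)) (comm (ι G x) (ιφ G y)) =
      (comm (ι G (comm x y)) (ιφ G (comm a b)))⁻¹ := by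
  rw [comm_eq_inv_mul_conj, peiffer, ← comm_eq_inv_mul_conj, mech0]

lemma TL_subset_SK : TLset G ⊆ SKset G := fun x hx => Or.inl (Or.inl hx)

lemma K_TL {u v : G} (hu : u ∈ derivedSeries G 1) (hv : v ∈ derivedSeries G 1) :
    comm (ι G u) (ιφ G v) ∈ closure (SKset G) :=
  subset_closure (Or.inl (Or.inl ⟨u, hu, v, hv, rfl⟩))

lemma K_ι2 {w : G} (hw : w ∈ derivedSeries G 2) : ι G w ∈ closure (SKset G) :=
  subset_closure (Or.inl (Or.inr ⟨w, hw, rfl⟩))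

lemma K_ιφ2 {w : G} (hw : w ∈ derivedSeries G 2) : ιφ G w ∈ closure (SKset G) :=
  subset_closure (Or.inr ⟨w, hw, rfl⟩)

lemma auxA {u : G} (hu : u ∈ derivedSeries G 1) :
    ∀ t ∈ SKset G, conj t (ι G u) ∈ closure (SKset G) := by
  rintro t ((⟨p, hp, q, hq, rfl⟩ | ⟨w, hw, rfl⟩) | ⟨w, hw, rfl⟩)
  · rw [tconj]; exact K_TL (conj_mem_DS hp u) (conj_mem_DS hq u)
  · rw [← ι_conjG]; exact K_ι2 (conj_mem_DS hw u)
  · rw [conj_eq_mul_comm, ← comm_inv]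
    exact mul_mem (K_ιφ2 hw) (inv_mem (K_TL hu (ds2_le_ds1 hw)))

lemma auxB {u : G} (hu : u ∈ derivedSeries G 1) :
    ∀ t ∈ SKset G, conj t (ιφ G u) ∈ closure (SKset G) := by
  rintro t ((⟨p, hp, q, hq, rfl⟩ | ⟨w, hw, rfl⟩) | ⟨w, hw, rfl⟩)
  · rw [tconjφ]; exact K_TL (conj_mem_DS hp u) (conj_mem_DS hq u)
  · rw [conj_eq_mul_comm]
    exact mul_mem (K_ι2 hw) (K_TL (ds2_le_ds1 hw) hu)
  · rw [← ιφ_conjG]; exact K_ιφ2 (conj_mem_DS hw u)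

lemma auxC (x y : G) : ∀ t ∈ SKset G,
    conj t (comm (ι G x) (ιφ G y)) ∈ closure (SKset G) ∧
      conj t (comm (ι G x) (ιφ G y))⁻¹ ∈ closure (SKset G) := by
  have hLK : closure (TLset G) ≤ closure (SKset G) := closure_mono TL_subset_SK
  rintro t ((⟨p, hp, q, hq, rfl⟩ | ⟨w, hw, rfl⟩) | ⟨w, hw, rfl⟩)
  · constructor
    · rw [peiffer, tconj]
      exact K_TL (conj_mem_DS hp _) (conj_mem_DS hq _)
    · rw [peiffer', tconj]
      exact K_TL (conj_mem_DS hp _) (conj_mem_DS hq _)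
  · constructor
    · rw [conj_eq_mul_comm, mechA]
      exact mul_mem (K_ι2 hw) (K_TL (ds2_le_ds1 hw) (comm_mem_DS1 x y))
    · rw [conj_eq_mul_comm, comm_inv_right', mechA]
      refine mul_mem (K_ι2 hw) (hLK ?_)
      have e : conj (comm (ι G w) (ιφ G (comm x y)))⁻¹ (comm (ι G x) (ιφ G y))⁻¹ =
          comm (ι G x) (ιφ G y) * (comm (ι G w) (ιφ G (comm x y)))⁻¹ *
            (comm (ι G x) (ιφ G y))⁻¹ := by
        rw [conj_def]; group
      rw [e]
      exact L_stab _ _ (inv_mem (subset_closure ⟨w, ds2_le_ds1 hw, _, comm_mem_DS1 x y, rfl⟩))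
  · have hcomm : comm (ιφ G w) (comm (ι G x) (ιφ G y)) =
        comm (ι G w) (ιφ G (comm x y)) := by
      rw [← comm_inv (comm (ι G x) (ιφ G y)) (ιφ G w), comm_tensor_φ, mech0, inv_inv]
    constructor
    · rw [conj_eq_mul_comm, hcomm]
      exact mul_mem (K_ιφ2 hw) (K_TL (ds2_le_ds1 hw) (comm_mem_DS1 x y))
    · rw [conj_eq_mul_comm, comm_inv_right', hcomm]
      refine mul_mem (K_ιφ2 hw) (hLK ?_)
      have e : conj (comm (ι G w) (ιφ G (comm x y)))⁻¹ (comm (ι G x) (ιφ G y))⁻¹ =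
          comm (ι G x) (ιφ G y) * (comm (ι G w) (ιφ G (comm x y)))⁻¹ *
            (comm (ι G x) (ιφ G y))⁻¹ := by
        rw [conj_def]; group
      rw [e]
      exact L_stab _ _ (inv_mem (subset_closure ⟨w, ds2_le_ds1 hw, _, comm_mem_DS1 x y, rfl⟩))

lemma K_stabE : ∀ e ∈ closure (SEset G), ∀ k ∈ closure (SKset G),
    e * k * e⁻¹ ∈ closure (SKset G) := by
  refine stab_closure ?_
  rintro s ((⟨x, y, rfl⟩ | ⟨u, hu, rfl⟩) | ⟨u, hu, rfl⟩)
  · constructor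
    · intro t ht
      have e : comm (ι G x) (ιφ G y) * t * (comm (ι G x) (ιφ G y))⁻¹ =
          conj t (comm (ι G x) (ιφ G y))⁻¹ := by rw [conj_def]; group
      rw [e]; exact (auxC x y t ht).2
    · intro t ht
      have e : (comm (ι G x) (ιφ G y))⁻¹ * t * comm (ι G x) (ιφ G y) =
          conj t (comm (ι G x) (ιφ G y)) := by rw [conj_def]
      rw [e]; exact (auxC x y t ht).1
  · constructor
    · intro t ht
      have e : ι G u * t * (ι G u)⁻¹ = conj t (ι G u⁻¹) := by rw [conj_def, ι_inv]; group
      rw [e]; exact auxA (inv_mem hu) t ht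
    · intro t ht
      have e : (ι G u)⁻¹ * t * ι G u = conj t (ι G u) := by rw [conj_def]
      rw [e]; exact auxA hu t ht
  · constructor
    · intro t ht
      have e : ιφ G u * t * (ιφ G u)⁻¹ = conj t (ιφ G u⁻¹) := by rw [conj_def, ιφ_inv]; group
      rw [e]; exact auxB (inv_mem hu) t ht
    · intro t ht
      have e : (ιφ G u)⁻¹ * t * ιφ G u = conj t (ιφ G u) := by rw [conj_def]
      rw [e]; exact auxB hu t ht

end Sub2

end TensorNu
namespace TensorNu

open Subgroup

section Sub3
universe u
variable {G : Type u} [Group G]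

lemma comm_SE : ∀ s ∈ SEset G, ∀ t ∈ SEset G, comm s t ∈ closure (SKset G) := by
  rintro s ((⟨a, b, rfl⟩ | ⟨u, hu, rfl⟩) | ⟨u, hu, rfl⟩)
    <;> rintro t ((⟨c, d, rfl⟩ | ⟨v, hv, rfl⟩) | ⟨v, hv, rfl⟩)
  -- s tensor
  · rw [comm_tensor_tensor]
    exact inv_mem (K_TL (comm_mem_DS1 c d) (comm_mem_DS1 a b))
  · rw [mech0]
    exact inv_mem (K_TL hv (comm_mem_DS1 a b))
  · rw [comm_tensor_φ, mech0]
    exact inv_mem (K_TL hv (comm_mem_DS1 a b))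
  -- s = ι u
  · rw [← comm_inv, mech0, inv_inv]
    exact K_TL hu (comm_mem_DS1 c d)
  · rw [← ι_comm]
    exact K_ι2 (comm_mem_DS2 hu hv)
  · exact K_TL hu hv
  -- s = ιφ u
  · rw [← comm_inv, comm_tensor_φ, mech0, inv_inv]
    exact K_TL hu (comm_mem_DS1 c d)
  · rw [← comm_inv]
    exact inv_mem (K_TL hv hu)
  · rw [← ιφ_comm]
    exact K_ιφ2 (comm_mem_DS2 hu hv)

lemma D1_le_E : derivedSeries (Nu G) 1 ≤ closure (SEset G) := by
  have hbase : ∀ s ∈ Set.range (ι G) ∪ Set.range (ιφ G),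
      ∀ t ∈ Set.range (ι G) ∪ Set.range (ιφ G), ⁅s, t⁆ ∈ closure (SEset G) := by
    rintro s (⟨g, rfl⟩ | ⟨g, rfl⟩) t (⟨h, rfl⟩ | ⟨h, rfl⟩)
    · rw [commutator_eq_comm_inv, ← ι_inv, ← ι_inv, ← ι_comm]
      exact subset_closure (Or.inl (Or.inr ⟨_, comm_mem_DS1 _ _, rfl⟩))
    · rw [commutator_eq_comm_inv, ← ι_inv, ← ιφ_inv]
      exact subset_closure (Or.inl (Or.inl ⟨_, _, rfl⟩))
    · rw [commutator_eq_comm_inv, ← ι_inv, ← ιφ_inv, ← comm_inv]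
      exact inv_mem (subset_closure (Or.inl (Or.inl ⟨_, _, rfl⟩)))
    · rw [commutator_eq_comm_inv, ← ιφ_inv, ← ιφ_inv, ← ιφ_comm]
      exact subset_closure (Or.inr ⟨_, comm_mem_DS1 _ _, rfl⟩)
  have h := commutator_closure_le (S := Set.range (ι G) ∪ Set.range (ιφ G))
    (H := closure (SEset G)) (fun x _ k hk => E_stab x k hk) hbase
  rw [show (1 : ℕ) = 0 + 1 from rfl, derivedSeries_succ, derivedSeries_zero]
  refine commutator_le.mpr fun a _ b _ => ?_
  have ha : a ∈ closure (Set.range (ι G) ∪ Set.range (ιφ G)) := by rw [top_gen]; trivial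
  have hb : b ∈ closure (Set.range (ι G) ∪ Set.range (ιφ G)) := by rw [top_gen]; trivial
  exact h a ha b hb

lemma D2_le_K : derivedSeries (Nu G) 2 ≤ closure (SKset G) := by
  have hbase : ∀ s ∈ SEset G, ∀ t ∈ SEset G, ⁅s, t⁆ ∈ closure (SKset G) := by
    intro s hs t ht
    rw [commutator_eq_conj_comm]
    have e : conj (comm t s)⁻¹ (t⁻¹ * s⁻¹) =
        s * t * (comm t s)⁻¹ * (s * t)⁻¹ := by rw [conj_def]; group
    rw [e]
    exact K_stabE (s * t) (mul_mem (subset_closure hs) (subset_closure ht)) _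
      (inv_mem (comm_SE t ht s hs))
  have h := commutator_closure_le (S := SEset G) (H := closure (SKset G)) K_stabE hbase
  rw [show (2 : ℕ) = 1 + 1 from rfl, derivedSeries_succ]
  exact commutator_le.mpr fun a ha b hb => h a (D1_le_E ha) b (D1_le_E hb)

lemma K_le_D2 : closure (SKset G) ≤ derivedSeries (Nu G) 2 := by
  have hι : ∀ {u : G}, u ∈ derivedSeries G 1 → ι G u ∈ derivedSeries (Nu G) 1 := by
    intro u hu
    exact map_derivedSeries_le_derivedSeries (ihom : G →* Nu G) 1 ⟨u, hu, rfl⟩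
  have hιφ : ∀ {u : G}, u ∈ derivedSeries G 1 → ιφ G u ∈ derivedSeries (Nu G) 1 := by
    intro u hu
    exact map_derivedSeries_le_derivedSeries (fhom : G →* Nu G) 1 ⟨u, hu, rfl⟩
  refine (closure_le _).mpr ?_
  rintro x ((⟨u, hu, v, hv, rfl⟩ | ⟨w, hw, rfl⟩) | ⟨w, hw, rfl⟩)
  · show comm (ι G u) (ιφ G v) ∈ derivedSeries (Nu G) 2
    rw [comm_eq_commutator, show (2 : ℕ) = 1 + 1 from rfl, derivedSeries_succ]
    exact commutator_mem_commutator (inv_mem (hι hu)) (inv_mem (hιφ hv))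
  · exact map_derivedSeries_le_derivedSeries (ihom : G →* Nu G) 2 ⟨w, hw, rfl⟩
  · exact map_derivedSeries_le_derivedSeries (fhom : G →* Nu G) 2 ⟨w, hw, rfl⟩

lemma DS2_eq_K : derivedSeries (Nu G) 2 = closure (SKset G) :=
  le_antisymm D2_le_K K_le_D2

end Sub3

end TensorNu
namespace TensorNu

open scoped Pointwise
open Subgroup

section Final
universe u
variable {G : Type u} [Group G]

lemma closure_image_ι (H : Subgroup G) :
    closure (ι G '' (H : Set G)) = Subgroup.map (ihom : G →* Nu G) H := by
  have e : ι G '' (H : Set G) = (ihom : G →* Nu G) '' (H : Set G) := rfl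
  rw [e, ← MonoidHom.map_closure, closure_eq]

lemma closure_image_ιφ (H : Subgroup G) :
    closure (ιφ G '' (H : Set G)) = Subgroup.map (fhom : G →* Nu G) H := by
  have e : ιφ G '' (H : Set G) = (fhom : G →* Nu G) '' (H : Set G) := rfl
  rw [e, ← MonoidHom.map_closure, closure_eq]

lemma closure_TL_eq :
    closure (TLset G) = ⁅closure (ι G '' (derivedSeries G 1 : Set G)),
      closure (ιφ G '' (derivedSeries G 1 : Set G))⁆ := by
  apply le_antisymm
  · refine (closure_le _).mpr ?_
    rintro x ⟨u, hu, v, hv, rfl⟩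
    show comm (ι G u) (ιφ G v) ∈ _
    rw [comm_eq_commutator]
    exact commutator_mem_commutator (inv_mem (subset_closure ⟨u, hu, rfl⟩))
      (inv_mem (subset_closure ⟨v, hv, rfl⟩))
  · refine commutator_le.mpr fun a ha b hb => ?_
    rw [closure_image_ι] at ha
    rw [closure_image_ιφ] at hb
    obtain ⟨u, hu, rfl⟩ := ha
    obtain ⟨v, hv, rfl⟩ := hb
    have e : ⁅(ihom : G →* Nu G) u, (fhom : G →* Nu G) v⁆ =
        comm (ι G u⁻¹) (ιφ G v⁻¹) := by
      rw [commutator_eq_comm_inv, ι_inv, ιφ_inv]; rfl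
    rw [e]
    exact subset_closure ⟨u⁻¹, inv_mem hu, v⁻¹, inv_mem hv, rfl⟩

lemma K_eq_sup :
    closure (SKset G) = ⁅closure (ι G '' (derivedSeries G 1 : Set G)),
        closure (ιφ G '' (derivedSeries G 1 : Set G))⁆ ⊔
      closure (ι G '' (derivedSeries G 2 : Set G)) ⊔
      closure (ιφ G '' (derivedSeries G 2 : Set G)) := by
  show closure ((TLset G ∪ ι G '' (derivedSeries G 2 : Set G)) ∪
      ιφ G '' (derivedSeries G 2 : Set G)) = _
  rw [Subgroup.closure_union, Subgroup.closure_union, closure_TL_eq]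

end Final

end TensorNu

namespace TensorNu

open scoped Pointwise
open Subgroup

/-- `ν(G)'' = [G', (G')^φ] · G'' · (G'')^φ`, where `G'`, `G''` (resp. `(G')^φ`, `(G'')^φ`)
denote the images in `ν(G)` of the first and second derived subgroups of `G`
(resp. of the copy `G^φ`). -/
theorem secondDerived_nu_eq (G : Type u) [Group G] :
    (derivedSeries (Nu G) 2 : Set (Nu G)) =
      (⁅Subgroup.closure (ι G '' (derivedSeries G 1 : Set G)),
          Subgroup.closure (ιφ G '' (derivedSeries G 1 : Set G))⁆ : Subgroup (Nu G)) *
        (Subgroup.closure (ι G '' (derivedSeries G 2 : Set G)) : Subgroup (Nu G)) *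
        (Subgroup.closure (ιφ G '' (derivedSeries G 2 : Set G)) : Subgroup (Nu G)) := by
  set Lst : Subgroup (Nu G) := ⁅Subgroup.closure (ι G '' (derivedSeries G 1 : Set G)),
    Subgroup.closure (ιφ G '' (derivedSeries G 1 : Set G))⁆ with hLst
  set A2 : Subgroup (Nu G) := Subgroup.closure (ι G '' (derivedSeries G 2 : Set G)) with hA2
  set B2 : Subgroup (Nu G) := Subgroup.closure (ιφ G '' (derivedSeries G 2 : Set G)) with hB2
  have hK : derivedSeries (Nu G) 2 = Lst ⊔ A2 ⊔ B2 := by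
    rw [DS2_eq_K, K_eq_sup]
  -- conjugation stability of Lst
  have hLstab : ∀ x : Nu G, ∀ l ∈ Lst, x * l * x⁻¹ ∈ Lst := by
    intro x l hl
    rw [hLst, ← closure_TL_eq] at hl ⊢
    exact L_stab x l hl
  -- commutators of B2 with A2 lie in Lst
  have hBA : ⁅B2, A2⁆ ≤ Lst := by
    refine commutator_le.mpr fun b hb a ha => ?_
    rw [hB2, closure_image_ιφ] at hb
    rw [hA2, closure_image_ι] at ha
    obtain ⟨w, hw, rfl⟩ := hb
    obtain ⟨w', hw', rfl⟩ := ha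
    rw [← commutatorElement_inv]
    refine inv_mem ?_
    exact commutator_mem_commutator
      (subset_closure ⟨w', ds2_le_ds1 hw', rfl⟩)
      (subset_closure ⟨w, ds2_le_ds1 hw, rfl⟩)
  have hBAelt : ∀ {b a : Nu G}, b ∈ B2 → a ∈ A2 → comm b a ∈ Lst := by
    intro b a hb ha
    rw [comm_eq_commutator]
    exact hBA (commutator_mem_commutator (inv_mem hb) (inv_mem ha))
  -- the product set is a subgroup
  have hP_mem : ∀ {x : Nu G}, x ∈ (Lst : Set (Nu G)) * A2 * B2 ↔
      ∃ l ∈ Lst, ∃ a ∈ A2, ∃ b ∈ B2, l * a * b = x := by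
    intro x
    constructor
    · rintro ⟨y, hy, b, hb, rfl⟩
      obtain ⟨l, hl, a, ha, rfl⟩ := hy
      exact ⟨l, hl, a, ha, b, hb, rfl⟩
    · rintro ⟨l, hl, a, ha, b, hb, rfl⟩
      exact ⟨l * a, ⟨l, hl, a, ha, rfl⟩, b, hb, rfl⟩
  apply Set.eq_of_subset_of_subset
  · -- hard direction : DS₂ ⊆ product
    intro x hx
    have hx' : x ∈ Lst ⊔ A2 ⊔ B2 := by rw [← hK]; exact hx
    -- the product set is a subgroup KP
    let KP : Subgroup (Nu G) :=
      { carrier := (Lst : Set (Nu G)) * A2 * B2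
        one_mem' := hP_mem.mpr ⟨1, one_mem _, 1, one_mem _, 1, one_mem _, by group⟩
        mul_mem' := by
          intro p q hp hq
          obtain ⟨l₁, hl₁, a₁, ha₁, b₁, hb₁, rfl⟩ := hP_mem.mp hp
          obtain ⟨l₂, hl₂, a₂, ha₂, b₂, hb₂, rfl⟩ := hP_mem.mp hq
          refine hP_mem.mpr ⟨l₁ * (a₁ * (b₁ * l₂ * b₁⁻¹) * a₁⁻¹) *
              ((a₁ * a₂) * (b₁ * comm b₁ a₂ * b₁⁻¹) * (a₁ * a₂)⁻¹),
            ?_, a₁ * a₂, mul_mem ha₁ ha₂, b₁ * b₂, mul_mem hb₁ hb₂, ?_⟩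
          · exact mul_mem (mul_mem hl₁ (hLstab _ _ (hLstab _ _ hl₂)))
              (hLstab _ _ (hLstab _ _ (hBAelt hb₁ ha₂)))
          · simp only [comm_def]; group
        inv_mem' := by
          intro p hp
          obtain ⟨l, hl, a, ha, b, hb, rfl⟩ := hP_mem.mp hp
          refine hP_mem.mpr ⟨((b⁻¹ * a⁻¹) * l⁻¹ * (b⁻¹ * a⁻¹)⁻¹) *
              (a⁻¹ * (b⁻¹ * comm b⁻¹ a⁻¹ * b) * a),
            ?_, a⁻¹, inv_mem ha, b⁻¹, inv_mem hb, ?_⟩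
          · refine mul_mem (hLstab _ _ (inv_mem hl)) ?_
            have h1 : comm b⁻¹ a⁻¹ ∈ Lst := hBAelt (inv_mem hb) (inv_mem ha)
            have h2 : b⁻¹ * comm b⁻¹ a⁻¹ * b = b⁻¹ * comm b⁻¹ a⁻¹ * (b⁻¹)⁻¹ := by group
            have h3 := hLstab b⁻¹ _ h1
            rw [← h2] at h3
            have h4 := hLstab a⁻¹ _ h3
            have h5 : a⁻¹ * (b⁻¹ * comm b⁻¹ a⁻¹ * b) * (a⁻¹)⁻¹ =
                a⁻¹ * (b⁻¹ * comm b⁻¹ a⁻¹ * b) * a := by group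
            rw [h5] at h4
            exact h4
          · simp only [comm_def]; group }
    have hle : Lst ⊔ A2 ⊔ B2 ≤ KP := by
      refine sup_le (sup_le ?_ ?_) ?_
      · intro l hl
        show l ∈ (Lst : Set (Nu G)) * A2 * B2
        exact hP_mem.mpr ⟨l, hl, 1, one_mem _, 1, one_mem _, by group⟩
      · intro a ha
        show a ∈ (Lst : Set (Nu G)) * A2 * B2
        exact hP_mem.mpr ⟨1, one_mem _, a, ha, 1, one_mem _, by group⟩
      · intro b hb
        show b ∈ (Lst : Set (Nu G)) * A2 * B2
        exact hP_mem.mpr ⟨1, one_mem _, 1, one_mem _, b, hb, by group⟩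
    exact hle hx'
  · -- easy direction
    intro x hx
    obtain ⟨l, hl, a, ha, b, hb, rfl⟩ := hP_mem.mp hx
    have h1 : Lst ≤ derivedSeries (Nu G) 2 := by rw [hK]; exact le_sup_left.trans le_sup_left
    have h2 : A2 ≤ derivedSeries (Nu G) 2 := by rw [hK]; exact le_sup_right.trans le_sup_left
    have h3 : B2 ≤ derivedSeries (Nu G) 2 := by rw [hK]; exact le_sup_right
    exact mul_mem (mul_mem (h1 hl) (h2 ha)) (h3 hb)

end TensorNu
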